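/- Let p be a prime or p = ∞. Assume E[|log|a₁|_p|] < ∞, E[log⁺|b₁|_p] < ∞ (with the convention log⁺|0|_p = 0), and that the p-drift φ_p = E[log|a₁|_p] is strictly negative. Then the infinite series Σ_{k=1}^∞ a₁⋯a_{k−1} b_k converges almost surely in ℚ_p. -/

import Mathlib

open MeasureTheory ProbabilityTheory Filter Topology

-- helper: Cesàro convergence implies u n / n → 0
lemma cesaro_div_zero {u : ℕ → ℝ} {m : ℝ}
    (h : Tendsto (fun n : ℕ => (∑ i ∈ Finset.range n, u i) / n) atTop (𝓝 m)) :
    Tendsto (fun n : ℕ => u n / n) atTop (𝓝 0) := by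
  have h1 : Tendsto (fun n : ℕ => (∑ i ∈ Finset.range (n+1), u i) / (n+1) * ((n+1)/n)
      - (∑ i ∈ Finset.range n, u i) / n) atTop (𝓝 (m * 1 - m)) := by
    apply Tendsto.sub _ h
    apply Tendsto.mul
    · exact (h.comp (tendsto_add_atTop_nat 1)).congr (fun n => by simp [Function.comp, add_comm 1 n])
    · have : Tendsto (fun n : ℕ => 1 + 1 / (n:ℝ)) atTop (𝓝 (1 + 0)) :=
        tendsto_const_nhds.add tendsto_one_div_atTop_nhds_zero_nat
      simp only [add_zero] at this
      apply this.congr'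
      filter_upwards [eventually_gt_atTop 0] with n hn
      field_simp
  rw [mul_one, sub_self] at h1
  apply h1.congr'
  filter_upwards [eventually_gt_atTop 0] with n hn
  have hn' : (n:ℝ) ≠ 0 := Nat.cast_ne_zero.mpr hn.ne'
  rw [Finset.sum_range_succ]
  field_simp
  try ring

/-- Let `p` be a prime or `p = ∞`; the corresponding completion of `ℚ`
is modelled by a complete normed field `K` together with a ring embedding `ι : ℚ →+* K`
with dense range, whose norm restricts on `ℚ` to the usual absolute value (`p = ∞`)
or to the `p`-adic absolute value for some prime `p`.  Given an i.i.d. sequence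
`(aₙ, bₙ)` with values in `ℚ* × ℚ`, if `E[|log |a₁|_p|] < ∞`, `E[log⁺ |b₁|_p] < ∞`
and the drift `φ_p = E[log |a₁|_p]` is strictly negative, then the series
`Σ_{k≥1} a₁⋯a_{k-1} b_k` converges almost surely in `ℚ_p`. -/
theorem statement0
    {Ω : Type*} [MeasureSpace Ω] [IsProbabilityMeasure (ℙ : Measure Ω)]
    (a b : ℕ → Ω → ℚ)
    (hmeas : ∀ n, Measurable fun ω => (a n ω, b n ω))
    (hindep : iIndepFun (fun n ω => (a n ω, b n ω)) ℙ)
    (hident : ∀ n, IdentDistrib (fun ω => (a n ω, b n ω)) (fun ω => (a 0 ω, b 0 ω)) ℙ ℙ)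
    (hne : ∀ n ω, a n ω ≠ 0)
    {K : Type*} [NormedField K] [CompleteSpace K]
    (ι : ℚ →+* K) (hdense : DenseRange ι)
    (hplace : (∀ q : ℚ, ‖ι q‖ = |(q : ℝ)|) ∨
      ∃ p : ℕ, p.Prime ∧ ∀ q : ℚ, ‖ι q‖ = (padicNorm p q : ℝ))
    (hInta : Integrable (fun ω => Real.log ‖ι (a 0 ω)‖) ℙ)
    (hIntb : Integrable (fun ω => max (Real.log ‖ι (b 0 ω)‖) 0) ℙ)
    (hdrift : ∫ ω, Real.log ‖ι (a 0 ω)‖ ∂ℙ < 0) :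
    ∀ᵐ ω ∂ℙ, ∃ L : K,
      Tendsto (fun n => ι (∑ k ∈ Finset.range n, (∏ j ∈ Finset.range k, a j ω) * b k ω))
        atTop (𝓝 L) := by
  classical
  set X : ℕ → Ω → ℝ := fun n ω => Real.log ‖ι (a n ω)‖ with hX
  set Y : ℕ → Ω → ℝ := fun n ω => max (Real.log ‖ι (b n ω)‖) 0 with hY
  have hga : Measurable (fun q : ℚ × ℚ => Real.log ‖ι q.1‖) := measurable_of_countable _
  have hgb : Measurable (fun q : ℚ × ℚ => max (Real.log ‖ι q.2‖) 0) := measurable_of_countable _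
  have hindepX : Pairwise (Function.onFun (IndepFun · · ℙ) X) := fun i j hij =>
    (hindep.indepFun hij).comp hga hga
  have hindepY : Pairwise (Function.onFun (IndepFun · · ℙ) Y) := fun i j hij =>
    (hindep.indepFun hij).comp hgb hgb
  have hidX : ∀ n, IdentDistrib (X n) (X 0) ℙ ℙ := fun n => (hident n).comp hga
  have hidY : ∀ n, IdentDistrib (Y n) (Y 0) ℙ ℙ := fun n => (hident n).comp hgb
  have hsllnX := strong_law_ae_real X hInta hindepX hidX
  have hsllnY := strong_law_ae_real Y hIntb hindepY hidY
  filter_upwards [hsllnX, hsllnY] with ω hXω hYω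
  have hYn : Tendsto (fun n : ℕ => Y n ω / n) atTop (𝓝 0) := cesaro_div_zero hYω
  set φ := ∫ ω, Real.log ‖ι (a 0 ω)‖ ∂ℙ with hφ
  set f : ℕ → K := fun k => ι ((∏ j ∈ Finset.range k, a j ω) * b k ω) with hf
  have hcomb : Tendsto (fun k : ℕ => ((∑ j ∈ Finset.range k, X j ω) + Y k ω) / k)
      atTop (𝓝 (φ + 0)) := by
    refine (hXω.add hYn).congr (fun n => ?_)
    rw [add_div]
  rw [add_zero] at hcomb
  have hr1 : Real.exp (φ/2) < 1 := Real.exp_lt_one_iff.mpr (by linarith)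
  have hr0 : (0:ℝ) ≤ Real.exp (φ/2) := (Real.exp_pos _).le
  have hev : ∀ᶠ k in atTop, ‖f k‖ ≤ 1 * ‖Real.exp (φ/2) ^ k‖ := by
    have h2 : ∀ᶠ k in atTop, ((∑ j ∈ Finset.range k, X j ω) + Y k ω) / k < φ/2 :=
      hcomb.eventually (Filter.Tendsto.eventually_lt_const (by linarith) tendsto_id) |>.mono
        (fun k hk => hk)
    filter_upwards [h2, eventually_gt_atTop 0] with k hk hk0
    have hkpos : (0:ℝ) < k := Nat.cast_pos.mpr hk0
    have hk' : (∑ j ∈ Finset.range k, X j ω) + Y k ω ≤ (φ/2) * k := by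
      rw [div_lt_iff₀ hkpos] at hk; linarith
    have hane : ∀ j, ι (a j ω) ≠ 0 := fun j h => hne j ω (ι.injective (by rw [h, map_zero]))
    have hprod : (∏ j ∈ Finset.range k, ‖ι (a j ω)‖)
        = Real.exp (∑ j ∈ Finset.range k, X j ω) := by
      rw [Real.exp_sum]
      exact Finset.prod_congr rfl fun j _ =>
        (Real.exp_log (norm_pos_iff.mpr (hane j))).symm
    have hble : ‖ι (b k ω)‖ ≤ Real.exp (Y k ω) := by
      by_cases hb0 : ι (b k ω) = 0
      · rw [hb0, norm_zero]; exact (Real.exp_pos _).le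
      · calc ‖ι (b k ω)‖ = Real.exp (Real.log ‖ι (b k ω)‖) :=
              (Real.exp_log (norm_pos_iff.mpr hb0)).symm
          _ ≤ Real.exp (Y k ω) := Real.exp_le_exp.mpr (le_max_left _ _)
    have hnorm : ‖f k‖ = (∏ j ∈ Finset.range k, ‖ι (a j ω)‖) * ‖ι (b k ω)‖ := by
      rw [hf]; simp [map_mul, norm_mul, norm_prod]
    calc ‖f k‖ = (∏ j ∈ Finset.range k, ‖ι (a j ω)‖) * ‖ι (b k ω)‖ := hnorm
      _ ≤ Real.exp (∑ j ∈ Finset.range k, X j ω) * Real.exp (Y k ω) := by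
          rw [hprod]; exact mul_le_mul_of_nonneg_left hble (Real.exp_pos _).le
      _ = Real.exp ((∑ j ∈ Finset.range k, X j ω) + Y k ω) := (Real.exp_add _ _).symm
      _ ≤ Real.exp ((φ/2) * k) := Real.exp_le_exp.mpr hk'
      _ = Real.exp (φ/2) ^ k := by rw [← Real.exp_nat_mul]; ring_nf
      _ ≤ 1 * ‖Real.exp (φ/2) ^ k‖ := by
          rw [one_mul, Real.norm_of_nonneg (pow_nonneg hr0 k)]
  have hsum : Summable f :=
    summable_of_isBigO_nat (summable_geometric_of_lt_one hr0 hr1)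
      (Asymptotics.isBigO_iff.mpr ⟨1, hev⟩)
  refine ⟨∑' k, f k, hsum.hasSum.tendsto_sum_nat.congr fun n => ?_⟩
  rw [map_sum]
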